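/- Let 𝔤 be a finite-dimensional real Lie algebra and let Z₁ = [X₁,Y₁], …, Z_n = [X_n,Y_n] be n linearly independent commutators in 𝔤. Then there exists a real number r > 0 such that for all real numbers t₁, …, t_n with 0 < |t_i| ≤ r for each i, the n vectors exp(ad(t_i X_i))Y_i − Y_i (i = 1,…,n) are linearly independent. -/

import Mathlib

open NormedSpace Topology

/-- Let `𝔤` be a finite-dimensional real Lie algebra (endowed with its
canonical Hausdorff vector space topology) and let `Z i = ⁅X i, Y i⁆`, `i = 1, …, n`, be
linearly independent commutators. Then there is `r > 0` such that for all `t₁, …, t_n` with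
`0 < |t i| ≤ r`, the vectors `exp(ad(t i • X i))(Y i) - Y i` are linearly independent, where
`exp(ad(Z)) = ∑ₖ (1/k!)·ad(Z)^k`. -/
theorem linearIndependent_expAd_sub {L : Type*} [LieRing L] [LieAlgebra ℝ L]
    [TopologicalSpace L] [IsTopologicalAddGroup L] [ContinuousSMul ℝ L] [T2Space L]
    [FiniteDimensional ℝ L] {n : ℕ} (X Y : Fin n → L)
    (h : LinearIndependent ℝ fun i => ⁅X i, Y i⁆) :
    ∃ r > (0 : ℝ), ∀ t : Fin n → ℝ, (∀ i, 0 < |t i| ∧ |t i| ≤ r) →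
      LinearIndependent ℝ fun i =>
        (∑' k : ℕ, ((k.factorial : ℝ))⁻¹ • ((LieAlgebra.ad ℝ L (t i • X i)) ^ k) (Y i))
          - Y i := by
  classical
  rcases Nat.eq_zero_or_pos n with hn | hn
  · subst hn
    exact ⟨1, one_pos, fun t _ => linearIndependent_empty_type⟩
  have hne : Nonempty (Fin n) := Fin.pos_iff_nonempty.mp hn
  set d := Module.finrank ℝ L with hd
  set E := (Fin d → ℝ)
  let e₀ : L ≃ₗ[ℝ] E := (Module.finBasis ℝ L).equivFun
  let e : L ≃L[ℝ] E := e₀.toContinuousLinearEquiv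
  -- conjugated operators
  let B : L → (E →L[ℝ] E) := fun x =>
    LinearMap.toContinuousLinearMap
      ((e₀ : L →ₗ[ℝ] E) ∘ₗ (LieAlgebra.ad ℝ L x : L →ₗ[ℝ] L) ∘ₗ (e₀.symm : E →ₗ[ℝ] L))
  have hB : ∀ (x y : L), B x (e₀ y) = e₀ ⁅x, y⁆ := by
    intro x y
    simp [B, LieAlgebra.ad_apply]
  have hBk : ∀ (x : L) (k : ℕ) (y : L),
      ((B x) ^ k) (e₀ y) = e₀ (((LieAlgebra.ad ℝ L x) ^ k) y) := by
    intro x k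
    induction k with
    | zero => intro y; simp
    | succ k ih =>
      intro y
      rw [pow_succ', pow_succ']
      simp only [ContinuousLinearMap.mul_apply, Module.End.mul_apply]
      rw [ih, hB, LieAlgebra.ad_apply]
  have hBs : ∀ (u : ℝ) (x : L), B (u • x) = u • B x := by
    intro u x
    ext z
    simp [B, LieAlgebra.ad_apply, smul_lie]
  let ψ : Fin n → ℝ → E := fun i s => exp (s • B (X i)) (e₀ (Y i))
  -- identification of the tsum
  have key : ∀ (i : Fin n) (u : ℝ),
      (∑' k : ℕ, ((k.factorial : ℝ))⁻¹ • ((LieAlgebra.ad ℝ L (u • X i)) ^ k) (Y i))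
        = e₀.symm (ψ i u) := by
    intro i u
    have hBA : u • B (X i) = B (u • X i) := (hBs u (X i)).symm
    have hs : HasSum (fun k : ℕ => ((k.factorial : ℝ))⁻¹ • (B (u • X i)) ^ k)
        (exp (B (u • X i))) := by
      rw [exp_eq_tsum ℝ]
      exact (NormedSpace.expSeries_summable' (𝕂 := ℝ) (B (u • X i))).hasSum
    have h1 : HasSum (fun k : ℕ => (((k.factorial : ℝ))⁻¹ • (B (u • X i)) ^ k) (e₀ (Y i)))
        (ψ i u) := by
      have := hs.mapL (ContinuousLinearMap.apply ℝ E (e₀ (Y i)))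
      simpa [ψ, hBA] using this
    have hterm : ∀ k : ℕ,
        (((k.factorial : ℝ))⁻¹ • (B (u • X i)) ^ k) (e₀ (Y i))
          = e₀ (((k.factorial : ℝ))⁻¹ • ((LieAlgebra.ad ℝ L (u • X i)) ^ k) (Y i)) := by
      intro k
      rw [ContinuousLinearMap.smul_apply, hBk]
      exact (e₀.map_smul _ _).symm
    rw [funext hterm] at h1
    have h2 := h1.mapL (e.symm : E →L[ℝ] L)
    have h3 : (fun k : ℕ => (e.symm : E →L[ℝ] L)
          (e₀ (((k.factorial : ℝ))⁻¹ • ((LieAlgebra.ad ℝ L (u • X i)) ^ k) (Y i))))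
        = fun k : ℕ =>
          ((k.factorial : ℝ))⁻¹ • ((LieAlgebra.ad ℝ L (u • X i)) ^ k) (Y i) := by
      funext k
      exact e₀.symm_apply_apply _
    rw [h3] at h2
    exact h2.tsum_eq
  -- the limit vectors
  let w : Fin n → E := fun i => e₀ ⁅X i, Y i⁆
  have hw : LinearIndependent ℝ w :=
    h.map' (e₀ : L →ₗ[ℝ] E) (LinearEquiv.ker e₀)
  obtain ⟨ε, hε, hball⟩ := Metric.isOpen_iff.mp
    (isOpen_setOf_linearIndependent (𝕜 := ℝ) (E := E)) w hw
  -- derivative of ψ i at 0 is w i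
  have hderiv : ∀ i, Filter.Tendsto (slope (ψ i) 0) (𝓝[≠] 0) (𝓝 (w i)) := by
    intro i
    have hexp : HasDerivAt (fun u : ℝ => exp (u • B (X i)))
        (exp ((0:ℝ) • B (X i)) * B (X i)) 0 := hasDerivAt_exp_smul_const (B (X i)) 0
    have h0 : exp ((0:ℝ) • B (X i)) * B (X i) = B (X i) := by
      rw [zero_smul, exp_zero, one_mul]
    rw [h0] at hexp
    have hD : HasDerivAt (ψ i) (B (X i) (e₀ (Y i))) 0 := by
      have := hexp.clm_apply (hasDerivAt_const (0:ℝ) (e₀ (Y i)))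
      simpa using this
    rw [hB] at hD
    exact hasDerivAt_iff_tendsto_slope.mp hD
  have hδ : ∀ i, ∃ δ > 0, ∀ u : ℝ, u ≠ 0 → |u| < δ →
      dist (slope (ψ i) 0 u) (w i) < ε := by
    intro i
    rcases Metric.tendsto_nhdsWithin_nhds.mp (hderiv i) ε hε with ⟨δ, hδ0, hδ⟩
    exact ⟨δ, hδ0, fun u hu hud => hδ hu (by simpa [Real.dist_eq] using hud)⟩
  choose δ hδ0 hδ using hδ
  have hr : 0 < Finset.univ.inf' Finset.univ_nonempty δ :=
    (Finset.lt_inf'_iff _).mpr fun i _ => hδ0 i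
  refine ⟨(Finset.univ.inf' Finset.univ_nonempty δ) / 2, half_pos hr, fun t ht => ?_⟩
  have htne : ∀ i, t i ≠ 0 := fun i => abs_pos.mp (ht i).1
  have hts : ∀ i, |t i| < δ i := fun i =>
    lt_of_le_of_lt (ht i).2 (lt_of_lt_of_le (half_lt_self hr)
      (Finset.inf'_le _ (Finset.mem_univ i)))
  set s : Fin n → E := fun i => slope (ψ i) 0 (t i) with hs_def
  have hsind : LinearIndependent ℝ s := by
    apply hball
    rw [Metric.mem_ball, dist_pi_lt_iff hε]
    exact fun i => hδ i (t i) (htne i) (hts i)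
  have hsL : LinearIndependent ℝ (fun i => e₀.symm (s i)) :=
    hsind.map' (e₀.symm : E →ₗ[ℝ] L) (LinearEquiv.ker e₀.symm)
  have hfin := hsL.units_smul fun i => Units.mk0 (t i) (htne i)
  convert hfin using 1
  funext i
  have hψ0 : ψ i 0 = e₀ (Y i) := by simp [ψ]
  simp only [Pi.smul_apply', Units.smul_mk0]
  rw [key i (t i), hs_def]
  simp only [slope, sub_zero, vsub_eq_sub, hψ0]
  rw [map_smul, map_sub, smul_smul, mul_inv_cancel₀ (htne i), one_smul,
    LinearEquiv.symm_apply_apply]
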